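/- Let $(Y_k)_{k\ge 0}$ be a sequence in $\{0,1\}$, $a_0 \ge 0$, $\eta \in (0,1)$, $p \in (0,1]$, $(\nu_k) \in \ell^1_+$, $(\varepsilon_k) \in \ell^p_+$, and define $a_{k+1} := (\eta + \nu_k)^{Y_k} a_k + Y_k \varepsilon_k$. Then for every $R \ge 1$ and every $q \in [p,1]$, $\sum_{k=0}^{R-1} Y_k a_{k+1}^q \le \frac{C_\nu^q}{1-\eta^q}\big[(\eta a_0)^q + \sum_{k=0}^\infty \varepsilon_k^q\big]$, where $C_\nu := \exp(\eta^{-1}\sum_{i=0}^\infty \nu_i)$. -/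

import Mathlib

lemma rpow_subadd {x y q : ℝ} (hx : 0 ≤ x) (hy : 0 ≤ y) (hq0 : 0 ≤ q) (hq1 : q ≤ 1) :
    (x + y) ^ q ≤ x ^ q + y ^ q := by
  lift x to NNReal using hx
  lift y to NNReal using hy
  have h := NNReal.rpow_add_le_add_rpow x y hq0 hq1
  exact_mod_cast h

set_option maxHeartbeats 1000000

/-- bound on the weighted sum `∑_{k<R} Y_k a_{k+1}^q` for the
recursively defined sequence `a (k+1) = (η + ν k)^(Y k) * a k + Y k * ε k`. -/
theorem stmt1 (Y : ℕ → ℝ) (hY : ∀ k, Y k = 0 ∨ Y k = 1)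
    (a ν ε : ℕ → ℝ) (η p q : ℝ) (hη0 : 0 < η) (hη1 : η < 1)
    (hp0 : 0 < p) (hp1 : p ≤ 1) (hpq : p ≤ q) (hq1 : q ≤ 1)
    (ha0 : 0 ≤ a 0)
    (hν : ∀ k, 0 ≤ ν k) (hνsum : Summable ν)
    (hε : ∀ k, 0 ≤ ε k) (hεsum : Summable (fun k => ε k ^ p))
    (hrec : ∀ k, a (k + 1) = (if Y k = 1 then η + ν k else 1) * a k + Y k * ε k)
    (R : ℕ) (hR : 1 ≤ R) :
    ∑ k ∈ Finset.range R, Y k * a (k + 1) ^ q ≤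
      (Real.exp (η⁻¹ * ∑' i, ν i)) ^ q / (1 - η ^ q) *
        ((η * a 0) ^ q + ∑' k, ε k ^ q) := by
  have hq0 : 0 < q := lt_of_lt_of_le hp0 hpq
  set C : ℝ := Real.exp (η⁻¹ * ∑' i, ν i) with hC
  set T : ℕ → ℝ := fun R => ∏ i ∈ Finset.range R, (if Y i = 1 then 1 + ν i / η else 1)
    with hT
  have hfac1 : ∀ i, (1:ℝ) ≤ (if Y i = 1 then 1 + ν i / η else 1) := by
    intro i
    split
    · nlinarith [hν i, div_nonneg (hν i) hη0.le]
    · exact le_rfl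
  have hT1 : ∀ R, (1:ℝ) ≤ T R := by
    intro R
    show (1:ℝ) ≤ ∏ i ∈ Finset.range R, (if Y i = 1 then 1 + ν i / η else 1)
    calc (1:ℝ) = ∏ _i ∈ Finset.range R, (1:ℝ) := by simp
      _ ≤ _ := Finset.prod_le_prod (by simp) (fun i _ => hfac1 i)
  have hTC : ∀ R, T R ≤ C := by
    intro R
    have h1 : T R ≤ ∏ i ∈ Finset.range R, Real.exp (η⁻¹ * ν i) := by
      apply Finset.prod_le_prod (fun i _ => le_trans zero_le_one (hfac1 i))
      intro i _
      split
      · have := Real.add_one_le_exp (η⁻¹ * ν i)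
        rw [div_eq_inv_mul]
        linarith
      · exact Real.one_le_exp (mul_nonneg (inv_nonneg.2 hη0.le) (hν i))
    rw [← Real.exp_sum] at h1
    refine h1.trans (Real.exp_le_exp.2 ?_)
    rw [← Finset.mul_sum]
    exact mul_le_mul_of_nonneg_left (Summable.sum_le_tsum _ (fun i _ => hν i) hνsum) (inv_nonneg.2 hη0.le)
  have hC0 : 0 < C := Real.exp_pos _
  have ha : ∀ k, 0 ≤ a k := by
    intro k
    induction k with
    | zero => exact ha0
    | succ n ih =>
      rw [hrec n]
      have hYn : 0 ≤ Y n := by rcases hY n with h | h <;> simp [h]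
      have : 0 ≤ (if Y n = 1 then η + ν n else 1) := by
        split
        · nlinarith [hν n]
        · exact zero_le_one
      exact add_nonneg (mul_nonneg this ih) (mul_nonneg hYn (hε n))
  set β : ℝ := η ^ q with hβ
  have hβ0 : 0 < β := Real.rpow_pos_of_pos hη0 q
  have hβ1 : β < 1 := Real.rpow_lt_one hη0.le hη1 hq0
  -- main induction
  have key : ∀ R, ∑ k ∈ Finset.range R, Y k * a (k + 1) ^ q
      + β / (1 - β) * (C / T R) ^ q * a R ^ q
      ≤ C ^ q / (1 - β) * ((η * a 0) ^ q + ∑ k ∈ Finset.range R, ε k ^ q) := by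
    intro R
    induction R with
    | zero =>
      simp only [Finset.range_zero, Finset.sum_empty, zero_add, add_zero]
      have hT0 : T 0 = 1 := by simp [hT]
      rw [hT0, div_one, Real.mul_rpow hη0.le ha0]
      apply le_of_eq
      ring
    | succ n ih =>
      rw [Finset.sum_range_succ, Finset.sum_range_succ]
      have hTsucc : T (n + 1) = T n * (if Y n = 1 then 1 + ν n / η else 1) :=
        Finset.prod_range_succ _ n
      rcases hY n with h0 | h1
      · have hY0 : ¬ (Y n = 1) := by rw [h0]; norm_num
        have han : a (n + 1) = a n := by rw [hrec n]; simp [hY0, h0]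
        have hTn : T (n + 1) = T n := by rw [hTsucc]; simp [hY0]
        rw [h0, han, hTn, zero_mul, add_zero]
        have : 0 ≤ C ^ q / (1 - β) * ε n ^ q := by
          have h1 : 0 ≤ ε n ^ q := Real.rpow_nonneg (hε n) q
          have h2 : 0 < 1 - β := by linarith
          positivity
        calc _ ≤ C ^ q / (1 - β) * ((η * a 0) ^ q + ∑ k ∈ Finset.range n, ε k ^ q) := ih
          _ ≤ _ := by nlinarith
      · have hTn : T (n + 1) = T n * (1 + ν n / η) := by rw [hTsucc]; simp [h1]
        have hw1 : (1:ℝ) ≤ 1 + ν n / η := hfac1 n |>.trans_eq (by simp [h1])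
        set u : ℝ := (C / T (n + 1)) ^ q with hu
        set w : ℝ := (1 + ν n / η) ^ q with hw
        have hTpos : 0 < T (n + 1) := lt_of_lt_of_le zero_lt_one (hT1 _)
        have hTnpos : 0 < T n := lt_of_lt_of_le zero_lt_one (hT1 _)
        have hu1 : 1 ≤ u := Real.one_le_rpow ((one_le_div hTpos).2 (hTC _)) hq0.le
        have huC : u ≤ C ^ q := by
          apply Real.rpow_le_rpow (div_nonneg hC0.le hTpos.le) _ hq0.le
          rw [div_le_iff₀ hTpos]
          nlinarith [hT1 (n + 1)]
        have hwge : 1 ≤ w := Real.one_le_rpow hw1 hq0.le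
        have hsplit : (C / T n) ^ q = u * w := by
          rw [hu, hw, ← Real.mul_rpow (div_nonneg hC0.le hTpos.le) (by linarith)]
          congr 1
          have hx : (1:ℝ) + ν n / η ≠ 0 := by linarith
          rw [hTn, div_mul_eq_mul_div, mul_comm (T n) _, ← div_div, mul_div_assoc,
            div_self hx, mul_one]
        have hrecn : a (n + 1) = (η + ν n) * a n + ε n := by
          rw [hrec n]; simp [h1]
        have hbound : a (n + 1) ^ q ≤ β * w * a n ^ q + ε n ^ q := by
          rw [hrecn]
          have h2 : ((η + ν n) * a n + ε n) ^ q ≤ ((η + ν n) * a n) ^ q + ε n ^ q :=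
            rpow_subadd (by nlinarith [hν n, ha n]) (hε n) hq0.le hq1
          have h3 : ((η + ν n) * a n) ^ q = β * w * a n ^ q := by
            have hsum : η + ν n = η * (1 + ν n / η) := by field_simp
            rw [hsum, hβ, hw, ← Real.mul_rpow hη0.le (by linarith : (0:ℝ) ≤ 1 + ν n / η),
              ← Real.mul_rpow (mul_nonneg hη0.le (by linarith)) (ha n)]
          linarith
        rw [hsplit] at ih
        rw [h1, one_mul]
        set A := a n ^ q with hA
        set E := ε n ^ q with hE
        set B := a (n + 1) ^ q with hB
        have hA0 : 0 ≤ A := Real.rpow_nonneg (ha n) q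
        have hE0 : 0 ≤ E := Real.rpow_nonneg (hε n) q
        have hB0 : 0 ≤ B := Real.rpow_nonneg (ha _) q
        have h1β : 0 < 1 - β := by linarith
        have h1βu : (0:ℝ) < 1 - β + β * u := by nlinarith
        have hkey : B * (1 - β) + β * u * B ≤ β * (u * w) * A + C ^ q * E := by
          nlinarith [mul_nonneg (sub_nonneg.2 hbound) h1βu.le,
            mul_nonneg hE0 (sub_nonneg.2 huC),
            mul_nonneg (mul_nonneg hE0 h1β.le) (sub_nonneg.2 hu1),
            mul_nonneg (mul_nonneg (mul_nonneg hβ0.le (le_trans zero_le_one hwge)) hA0)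
              (mul_nonneg h1β.le (sub_nonneg.2 hu1))]
        have hstep : B + β / (1 - β) * u * B ≤ β / (1 - β) * (u * w) * A
            + C ^ q / (1 - β) * E := by
          have e1 : B + β / (1 - β) * u * B = (B * (1 - β) + β * u * B) / (1 - β) := by
            field_simp
          have e2 : β / (1 - β) * (u * w) * A + C ^ q / (1 - β) * E
              = (β * (u * w) * A + C ^ q * E) / (1 - β) := by
            field_simp
          rw [e1, e2]
          exact div_le_div_of_nonneg_right hkey h1β.le
        calc ∑ k ∈ Finset.range n, Y k * a (k + 1) ^ q + B + β / (1 - β) * u * B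
            ≤ ∑ k ∈ Finset.range n, Y k * a (k + 1) ^ q + β / (1 - β) * (u * w) * A
              + C ^ q / (1 - β) * E := by linarith
          _ ≤ C ^ q / (1 - β) * ((η * a 0) ^ q + ∑ k ∈ Finset.range n, ε k ^ q)
              + C ^ q / (1 - β) * E := by linarith
          _ = _ := by ring
  -- summability of ε^q
  have hεq : Summable (fun k => ε k ^ q) := by
    apply Summable.of_norm_bounded_eventually_nat (g := fun k => ε k ^ p) hεsum
    have h1 : ∀ᶠ k in Filter.atTop, ε k ^ p < 1 :=
      hεsum.tendsto_atTop_zero.eventually (gt_mem_nhds one_pos)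
    filter_upwards [h1] with k hk
    rw [Real.norm_eq_abs, abs_of_nonneg (Real.rpow_nonneg (hε k) q)]
    rcases eq_or_lt_of_le (hε k) with h | h
    · rw [← h, Real.zero_rpow (ne_of_gt hq0), Real.zero_rpow (ne_of_gt hp0)]
    · have hlt1 : ε k < 1 := by
        by_contra hcon
        push_neg at hcon
        exact absurd (Real.one_le_rpow hcon hp0.le) (not_le.2 hk)
      exact Real.rpow_le_rpow_of_exponent_ge h hlt1.le hpq
  have hfinal := key R
  have hnn : 0 ≤ β / (1 - β) * (C / T R) ^ q * a R ^ q := by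
    have h1 : 0 ≤ (C / T R) ^ q :=
      Real.rpow_nonneg (div_nonneg hC0.le (le_trans zero_le_one (hT1 R))) q
    have h2 : 0 ≤ a R ^ q := Real.rpow_nonneg (ha R) q
    have : 0 < 1 - β := by linarith
    positivity
  have hsum : ∑ k ∈ Finset.range R, ε k ^ q ≤ ∑' k, ε k ^ q :=
    Summable.sum_le_tsum _ (fun k _ => Real.rpow_nonneg (hε k) q) hεq
  have hCq : 0 ≤ C ^ q / (1 - β) := by
    have : 0 < 1 - β := by linarith
    positivity
  calc ∑ k ∈ Finset.range R, Y k * a (k + 1) ^ q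
      ≤ C ^ q / (1 - β) * ((η * a 0) ^ q + ∑ k ∈ Finset.range R, ε k ^ q) := by linarith
    _ ≤ C ^ q / (1 - β) * ((η * a 0) ^ q + ∑' k, ε k ^ q) := by
        apply mul_le_mul_of_nonneg_left _ hCq
        linarith
    _ = _ := rfl
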